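/- Let r ≥ 1 and let A = (a_{i,j}) be an r×r symmetrisable indecomposable generalised Cartan matrix of finite type. If f : {1,…,r} × ℤ → ℤ takes only nonnegative values and satisfies f(i,m) + f(i,m+1) = ∑_{j=i+1}^{r} (−a_{j,i})·f(j,m) + ∑_{j=1}^{i-1} (−a_{j,i})·f(j,m+1) for all (i,m) ∈ {1,…,r} × ℤ, then f is identically zero. In other words, there are no non-trivial ℤ_{≥0}-valued (tropical) Y-frieze patterns associated to A. -/

import Mathlib

open Matrix Finset

private lemma det_eq_minor_univ' {R : Type*} [CommRing R] {k : ℕ} (M : Matrix (Fin k) (Fin k) R) :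
    (M.submatrix (Subtype.val : {x // x ∈ (Finset.univ : Finset (Fin k))} → Fin k)
      Subtype.val).det = M.det := by
  have hmx : (M.submatrix (Subtype.val : {x // x ∈ (Finset.univ : Finset (Fin k))} → Fin k)
      Subtype.val) = M.submatrix (Equiv.subtypeUnivEquiv fun x => Finset.mem_univ x)
        (Equiv.subtypeUnivEquiv fun x => Finset.mem_univ x) := by
    ext a b
    rfl
  rw [hmx, Matrix.det_submatrix_equiv_self]

private lemma tri_split {r : ℕ} {M : Type*} [AddCommMonoid M] (i : Fin r) (X : Fin r → M) :
    ∑ j, X j = (∑ j, if i < j then X j else 0) + (∑ j, if j < i then X j else 0) + X i := by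
  have h : ∀ j : Fin r, X j =
      (if i < j then X j else 0) + (if j < i then X j else 0) + (if j = i then X j else 0) := by
    intro j
    rcases lt_trichotomy i j with h | h | h
    · simp [h, asymm h, h.ne']
    · simp [h.symm, lt_irrefl]
    · simp [h, asymm h, h.ne]
  calc ∑ j, X j = ∑ j, ((if i < j then X j else 0) + (if j < i then X j else 0)
        + (if j = i then X j else 0)) := Finset.sum_congr rfl (fun j _ => h j)
    _ = (∑ j, if i < j then X j else 0) + (∑ j, if j < i then X j else 0)
        + (∑ j, if j = i then X j else 0) := by
        rw [Finset.sum_add_distrib, Finset.sum_add_distrib]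
    _ = _ := by rw [Finset.sum_ite_eq' Finset.univ i X]; simp

private lemma lower_eq {r : ℕ} (E : Fin r → ℝ) (A' : Fin r → Fin r → ℝ)
    (hsym : ∀ i j, E i * A' j i = E j * A' i j) (u v : Fin r → ℝ) :
    (∑ i, ∑ j, if j < i then E i * A' j i * u i * v j else 0)
      = ∑ i, ∑ j, if i < j then E i * A' j i * v i * u j else 0 := by
  rw [Finset.sum_comm]
  refine Finset.sum_congr rfl (fun i _ => Finset.sum_congr rfl (fun j _ => ?_))
  split_ifs with h
  · linear_combination u j * v i * hsym j i
  · rfl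

/-- Decomposition of the quadratic form into diagonal and twice the upper part. -/
private lemma quad_decomp {r : ℕ} (E : Fin r → ℝ) (A' : Fin r → Fin r → ℝ)
    (hsym : ∀ i j, E i * A' j i = E j * A' i j) (hdiag : ∀ i, A' i i = 2) (u : Fin r → ℝ) :
    ∑ i, ∑ j, E i * A' j i * u i * u j
      = (∑ i, 2 * (E i * u i * u i))
        + 2 * ∑ i, ∑ j, if i < j then E i * A' j i * u i * u j else 0 := by
  have h1 : ∀ i : Fin r, ∑ j, E i * A' j i * u i * u j
      = (∑ j, if i < j then E i * A' j i * u i * u j else 0)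
        + (∑ j, if j < i then E i * A' j i * u i * u j else 0)
        + E i * A' i i * u i * u i := fun i => tri_split i (fun j => E i * A' j i * u i * u j)
  rw [Finset.sum_congr rfl (fun i _ => h1 i), Finset.sum_add_distrib, Finset.sum_add_distrib,
    lower_eq E A' hsym u u]
  have h2 : ∑ i, E i * A' i i * u i * u i = ∑ i, 2 * (E i * u i * u i) :=
    Finset.sum_congr rfl (fun i _ => by rw [hdiag i]; ring)
  rw [h2]; ring

/-- Conservation of the quadratic form along the tropical Y-frieze recursion. -/
private lemma conserve {r : ℕ} (E : Fin r → ℝ) (A' : Fin r → Fin r → ℝ)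
    (hsym : ∀ i j, E i * A' j i = E j * A' i j) (hdiag : ∀ i, A' i i = 2)
    (x y : Fin r → ℝ)
    (hxy : ∀ i, x i + y i = (∑ j, if i < j then (-A' j i) * x j else 0)
      + (∑ j, if j < i then (-A' j i) * y j else 0)) :
    ∑ i, ∑ j, E i * A' j i * x i * x j = ∑ i, ∑ j, E i * A' j i * y i * y j := by
  have key : ∑ i, E i * (x i - y i) * (x i + y i)
      = ∑ i, (E i * (x i - y i) * ((∑ j, if i < j then (-A' j i) * x j else 0)
          + (∑ j, if j < i then (-A' j i) * y j else 0))) :=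
    Finset.sum_congr rfl (fun i _ => by rw [hxy i])
  -- expand the right-hand side
  have expand : ∀ i : Fin r, E i * (x i - y i) * ((∑ j, if i < j then (-A' j i) * x j else 0)
      + (∑ j, if j < i then (-A' j i) * y j else 0))
      = ((∑ j, if i < j then -(E i * A' j i * x i * x j) else 0)
          + (∑ j, if i < j then E i * A' j i * y i * x j else 0))
        + ((∑ j, if j < i then -(E i * A' j i * x i * y j) else 0)
          + (∑ j, if j < i then E i * A' j i * y i * y j else 0)) := by
    intro i
    have h1 : E i * (x i - y i) * (∑ j, if i < j then (-A' j i) * x j else 0)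
        = (∑ j, if i < j then -(E i * A' j i * x i * x j) else 0)
          + (∑ j, if i < j then E i * A' j i * y i * x j else 0) := by
      rw [Finset.mul_sum, ← Finset.sum_add_distrib]
      exact Finset.sum_congr rfl (fun j _ => by split_ifs <;> ring)
    have h2 : E i * (x i - y i) * (∑ j, if j < i then (-A' j i) * y j else 0)
        = (∑ j, if j < i then -(E i * A' j i * x i * y j) else 0)
          + (∑ j, if j < i then E i * A' j i * y i * y j else 0) := by
      rw [Finset.mul_sum, ← Finset.sum_add_distrib]
      exact Finset.sum_congr rfl (fun j _ => by split_ifs <;> ring)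
    rw [mul_add, h1, h2]
  rw [Finset.sum_congr rfl (fun i _ => expand i)] at key
  rw [Finset.sum_add_distrib, Finset.sum_add_distrib, Finset.sum_add_distrib] at key
  -- name the four double sums
  have hneg1 : ∑ i, ∑ j, (if i < j then -(E i * A' j i * x i * x j) else 0)
      = -∑ i, ∑ j, (if i < j then E i * A' j i * x i * x j else 0) := by
    rw [← Finset.sum_neg_distrib]
    refine Finset.sum_congr rfl (fun i _ => ?_)
    rw [← Finset.sum_neg_distrib]
    exact Finset.sum_congr rfl (fun j _ => by split_ifs <;> ring)
  have hneg2 : ∑ i, ∑ j, (if j < i then -(E i * A' j i * x i * y j) else 0)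
      = -∑ i, ∑ j, (if j < i then E i * A' j i * x i * y j else 0) := by
    rw [← Finset.sum_neg_distrib]
    refine Finset.sum_congr rfl (fun i _ => ?_)
    rw [← Finset.sum_neg_distrib]
    exact Finset.sum_congr rfl (fun j _ => by split_ifs <;> ring)
  rw [hneg1, hneg2, lower_eq E A' hsym x y, lower_eq E A' hsym y y] at key
  have hlhs : ∑ i, E i * (x i - y i) * (x i + y i)
      = (∑ i, E i * x i * x i) - ∑ i, E i * y i * y i := by
    rw [← Finset.sum_sub_distrib]
    exact Finset.sum_congr rfl (fun i _ => by ring)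
  rw [hlhs] at key
  rw [quad_decomp E A' hsym hdiag x, quad_decomp E A' hsym hdiag y]
  have h2 : ∀ u : Fin r → ℝ, ∑ i, 2 * (E i * u i * u i) = 2 * ∑ i, E i * u i * u i :=
    fun u => by rw [Finset.mul_sum]
  rw [h2, h2]
  linarith [key]

/-- Transfer of principal minors along an injective reindexing. -/
private lemma minor_submatrix {k l : ℕ} (M : Matrix (Fin l) (Fin l) ℝ) (g : Fin k → Fin l)
    (hg : Function.Injective g) (J : Finset (Fin k)) :
    ((M.submatrix g g).submatrix (Subtype.val : {x // x ∈ J} → Fin k) Subtype.val).det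
      = (M.submatrix
          (Subtype.val : {y // y ∈ J.map ⟨g, hg⟩} → Fin l) Subtype.val).det := by
  have hbij : Function.Bijective (fun x : {x // x ∈ J} =>
      (⟨g x, Finset.mem_map_of_mem ⟨g, hg⟩ x.2⟩ : {y // y ∈ J.map ⟨g, hg⟩})) := by
    constructor
    · intro a b hab
      exact Subtype.ext (hg (Subtype.ext_iff.mp hab))
    · rintro ⟨y, hy⟩
      rcases Finset.mem_map.mp hy with ⟨x, hx, rfl⟩
      exact ⟨⟨x, hx⟩, rfl⟩
  let φ := Equiv.ofBijective _ hbij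
  have hmx : ((M.submatrix g g).submatrix (Subtype.val : {x // x ∈ J} → Fin k) Subtype.val)
      = (M.submatrix
          (Subtype.val : {y // y ∈ J.map ⟨g, hg⟩} → Fin l) Subtype.val).submatrix φ φ := by
    ext a b
    rfl
  rw [hmx, Matrix.det_submatrix_equiv_self]

private lemma det_eq_minor_univ {k : ℕ} (M : Matrix (Fin k) (Fin k) ℝ) :
    (M.submatrix (Subtype.val : {x // x ∈ (Finset.univ : Finset (Fin k))} → Fin k)
      Subtype.val).det = M.det := by
  have hmx : (M.submatrix (Subtype.val : {x // x ∈ (Finset.univ : Finset (Fin k))} → Fin k)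
      Subtype.val) = M.submatrix (Equiv.subtypeUnivEquiv fun x => Finset.mem_univ x)
        (Equiv.subtypeUnivEquiv fun x => Finset.mem_univ x) := by
    ext a b
    rfl
  rw [hmx, Matrix.det_submatrix_equiv_self]

private lemma posDef_of_posSemidef_det_ne_zero {k : ℕ} {M : Matrix (Fin k) (Fin k) ℝ}
    (h : M.PosSemidef) (hdet : M.det ≠ 0) : M.PosDef := by
  refine Matrix.PosDef.of_dotProduct_mulVec_pos h.1 (fun x hx => ?_)
  rcases (h.dotProduct_mulVec_nonneg x).lt_or_eq with hlt | heq
  · exact hlt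
  · exfalso
    apply hx
    have h0 : M *ᵥ x = 0 := (h.dotProduct_mulVec_zero_iff x).mp heq.symm
    have h1 : M⁻¹ *ᵥ (M *ᵥ x) = x := by
      rw [mulVec_mulVec, Matrix.nonsing_inv_mul M (isUnit_iff_ne_zero.mpr hdet), one_mulVec]
    rw [h0, mulVec_zero] at h1
    exact h1.symm

/-- Sylvester's criterion (sufficiency, positive semidefinite version):
a real symmetric matrix all of whose principal minors are positive is positive semidefinite. -/
private lemma posSemidef_of_minors_pos :
    ∀ (n : ℕ) (M : Matrix (Fin n) (Fin n) ℝ), M.IsHermitian →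
      (∀ I : Finset (Fin n), I.Nonempty →
        0 < (M.submatrix ((↑) : I → Fin n) ((↑) : I → Fin n)).det) → M.PosSemidef := by
  intro n
  induction n with
  | zero =>
    intro M hM _
    exact Matrix.PosSemidef.of_dotProduct_mulVec_nonneg hM (fun x => by simp [dotProduct])
  | succ n ih =>
    intro M hM hmin
    set e : Fin n ⊕ Fin 1 ≃ Fin (n + 1) := finSumFinEquiv with he
    set gl : Fin n → Fin (n + 1) := fun i => e (Sum.inl i) with hgl
    set gr : Fin 1 → Fin (n + 1) := fun i => e (Sum.inr i) with hgr
    have hglinj : Function.Injective gl := fun a b hab => Sum.inl_injective (e.injective hab)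
    set A := M.submatrix gl gl with hA
    set B := M.submatrix gl gr with hB
    set D := M.submatrix gr gr with hD
    have hsymm : ∀ a b, M b a = M a b := by
      intro a b
      have := congrFun (congrFun hM a) b
      rwa [Matrix.conjTranspose_apply, star_trivial] at this
    -- blocks
    have hblocks : M.submatrix e e = fromBlocks A B Bᴴ D := by
      ext i j
      cases i with
      | inl i => cases j with
        | inl j => rfl
        | inr j => rfl
      | inr i => cases j with
        | inl j =>
          show M (gr i) (gl j) = Bᴴ i j
          rw [Matrix.conjTranspose_apply, star_trivial]
          exact (hsymm (gr i) (gl j)).symm ▸ (hsymm (gl j) (gr i))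
        | inr j => rfl
    -- A is positive definite
    have hAherm : A.IsHermitian := hM.submatrix gl
    have hAminors : ∀ J : Finset (Fin n), J.Nonempty →
        0 < (A.submatrix ((↑) : J → Fin n) ((↑) : J → Fin n)).det := by
      intro J hJ
      rw [hA, minor_submatrix M gl hglinj J]
      exact hmin _ (Finset.Nonempty.map hJ)
    have hApsd : A.PosSemidef := ih A hAherm hAminors
    have hAdet : 0 < A.det := by
      rcases isEmpty_or_nonempty (Fin n) with hn | hn
      · rw [Matrix.det_isEmpty]
        exact one_pos
      · rw [← det_eq_minor_univ A]
        exact hAminors Finset.univ Finset.univ_nonempty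
    have hApd : A.PosDef := posDef_of_posSemidef_det_ne_zero hApsd hAdet.ne'
    have : Invertible A := A.invertibleOfIsUnitDet (isUnit_iff_ne_zero.mpr hAdet.ne')
    -- determinant of M
    have hMdet : 0 < M.det := by
      rw [← det_eq_minor_univ M]
      exact hmin Finset.univ Finset.univ_nonempty
    have hMdet' : M.det = A.det * (D - Bᴴ * A⁻¹ * B).det := by
      rw [← Matrix.det_submatrix_equiv_self e M, hblocks, Matrix.det_fromBlocks₁₁,
        Matrix.invOf_eq_nonsing_inv]
    -- the 1×1 Schur complement is positive semidefinite
    have hSdet : 0 < (D - Bᴴ * A⁻¹ * B).det := by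
      by_contra hc
      push_neg at hc
      nlinarith [hMdet, hMdet', hAdet]
    have hS00 : 0 < (D - Bᴴ * A⁻¹ * B) 0 0 := by
      rwa [Matrix.det_fin_one] at hSdet
    have hSpsd : (D - Bᴴ * A⁻¹ * B).PosSemidef := by
      refine Matrix.PosSemidef.of_dotProduct_mulVec_nonneg ?_ ?_
      · ext i j
        rw [Subsingleton.elim i 0, Subsingleton.elim j 0, Matrix.conjTranspose_apply,
          star_trivial]
      · intro x
        have : star x ⬝ᵥ (D - Bᴴ * A⁻¹ * B) *ᵥ x
            = (D - Bᴴ * A⁻¹ * B) 0 0 * (x 0 * x 0) := by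
          simp [dotProduct, Matrix.mulVec, Fin.sum_univ_one]
          ring
        rw [this]
        exact mul_nonneg hS00.le (mul_self_nonneg _)
    -- conclude
    have := (Matrix.PosDef.fromBlocks₁₁ B D hApd).mpr hSpsd
    rw [← hblocks] at this
    exact (Matrix.posSemidef_submatrix_equiv e).mp this

private lemma dot_symm {n : ℕ} {M : Matrix (Fin n) (Fin n) ℝ} (h : M.IsHermitian)
    (u v : Fin n → ℝ) : v ⬝ᵥ M *ᵥ u = u ⬝ᵥ M *ᵥ v := by
  have hMT : Mᵀ = M := by
    rw [← Matrix.conjTranspose_eq_transpose_of_trivial]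
    exact h
  calc v ⬝ᵥ M *ᵥ u = v ᵥ* M ⬝ᵥ u := by rw [Matrix.dotProduct_mulVec]
    _ = (M *ᵥ v) ⬝ᵥ u := by rw [← Matrix.vecMul_transpose, hMT]
    _ = u ⬝ᵥ M *ᵥ v := dotProduct_comm _ _

private lemma cauchy_schwarz {n : ℕ} {M : Matrix (Fin n) (Fin n) ℝ} (hM : M.PosSemidef)
    (x y : Fin n → ℝ) :
    (x ⬝ᵥ M *ᵥ y) ^ 2 ≤ (x ⬝ᵥ M *ᵥ x) * (y ⬝ᵥ M *ᵥ y) := by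
  have key : ∀ t : ℝ, 0 ≤ (y ⬝ᵥ M *ᵥ y) * (t * t) + (2 * (x ⬝ᵥ M *ᵥ y)) * t
      + (x ⬝ᵥ M *ᵥ x) := by
    intro t
    have h := hM.dotProduct_mulVec_nonneg (x + t • y)
    have hstar : star (x + t • y) = x + t • y := by simp
    rw [hstar] at h
    have hexp : (x + t • y) ⬝ᵥ M *ᵥ (x + t • y)
        = (y ⬝ᵥ M *ᵥ y) * (t * t) + (2 * (x ⬝ᵥ M *ᵥ y)) * t + (x ⬝ᵥ M *ᵥ x) := by
      rw [mulVec_add, mulVec_smul]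
      simp only [dotProduct_add, add_dotProduct, dotProduct_smul, smul_dotProduct,
        smul_eq_mul, smul_add]
      rw [dot_symm hM.1 x y]
      ring
    rw [hexp] at h
    exact h
  have hd := discrim_le_zero key
  rw [discrim] at hd
  nlinarith [hd]

private lemma coord_bound {n : ℕ} {M : Matrix (Fin n) (Fin n) ℝ} (hpsd : M.PosSemidef)
    (hdet : M.det ≠ 0) (x : Fin n → ℝ) (i : Fin n) :
    (x i) ^ 2 ≤ ((M⁻¹ *ᵥ Pi.single i 1) ⬝ᵥ M *ᵥ (M⁻¹ *ᵥ Pi.single i 1)) * (x ⬝ᵥ M *ᵥ x) := by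
  have h1 : (M⁻¹ *ᵥ Pi.single i 1) ⬝ᵥ M *ᵥ x = x i := by
    rw [dot_symm hpsd.1 x (M⁻¹ *ᵥ Pi.single i 1), mulVec_mulVec,
      Matrix.mul_nonsing_inv M (isUnit_iff_ne_zero.mpr hdet), one_mulVec]
    simp
  calc (x i) ^ 2 = ((M⁻¹ *ᵥ Pi.single i 1) ⬝ᵥ M *ᵥ x) ^ 2 := by rw [h1]
    _ ≤ _ := cauchy_schwarz hpsd _ _

private lemma sum_shift (g : ℤ → ℤ) (M N : ℤ) (h : M ≤ N) :
    (∑ m ∈ Finset.Icc M N, g (m + 1)) + g M = (∑ m ∈ Finset.Icc M N, g m) + g (N + 1) := by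
  have h1 : ∑ m ∈ Finset.Icc M N, g (m + 1) = ∑ m ∈ Finset.Icc (M + 1) (N + 1), g m := by
    rw [← Finset.map_add_right_Icc, Finset.sum_map]
    rfl
  have h2 : Finset.Icc M (N + 1) = insert (N + 1) (Finset.Icc M N) := by
    ext z
    simp only [Finset.mem_Icc, Finset.mem_insert]
    omega
  have h3 : Finset.Icc M (N + 1) = insert M (Finset.Icc (M + 1) (N + 1)) := by
    ext z
    simp only [Finset.mem_Icc, Finset.mem_insert]
    omega
  have h4 : (N + 1) ∉ Finset.Icc M N := by
    simp only [Finset.mem_Icc]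
    omega
  have h5 : M ∉ Finset.Icc (M + 1) (N + 1) := by
    simp only [Finset.mem_Icc]
    omega
  have e2 : ∑ m ∈ Finset.Icc M (N + 1), g m = g (N + 1) + ∑ m ∈ Finset.Icc M N, g m := by
    rw [h2, Finset.sum_insert h4]
  have e3 : ∑ m ∈ Finset.Icc M (N + 1), g m
      = g M + ∑ m ∈ Finset.Icc (M + 1) (N + 1), g m := by
    rw [h3, Finset.sum_insert h5]
  rw [h1]
  linarith [e2, e3]

/-- An r×r generalised Cartan matrix. -/
def IsGCM {r : ℕ} (A : Matrix (Fin r) (Fin r) ℤ) : Prop :=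
  (∀ i, A i i = 2) ∧ ∀ i j, i ≠ j → A i j ≤ 0 ∧ (A i j = 0 ↔ A j i = 0)

/-- `A` is symmetrisable: there exist positive integers `d i` with `d i * A i j = d j * A j i`. -/
def IsSymmetrisable {r : ℕ} (A : Matrix (Fin r) (Fin r) ℤ) : Prop :=
  ∃ d : Fin r → ℤ, (∀ i, 0 < d i) ∧ ∀ i j, d i * A i j = d j * A j i

/-- `A` is of finite type: every principal minor is positive. -/
def IsFiniteType {r : ℕ} (A : Matrix (Fin r) (Fin r) ℤ) : Prop :=
  ∀ I : Finset (Fin r), I.Nonempty →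
    0 < (A.submatrix ((↑) : I → Fin r) ((↑) : I → Fin r)).det

/-- `A` is indecomposable. -/
def IsIndecomposable {r : ℕ} (A : Matrix (Fin r) (Fin r) ℤ) : Prop :=
  ¬ ∃ I : Finset (Fin r), I.Nonempty ∧ I ≠ Finset.univ ∧
      ∀ i ∈ I, ∀ j, j ∉ I → A i j = 0

set_option maxHeartbeats 4000000 in
/-- There are no non-trivial `ℤ_{≥0}`-valued (tropical) Y-frieze patterns associated to an
indecomposable symmetrisable Cartan matrix of finite type. -/
theorem tropical_Yfrieze_trivial {r : ℕ} (hr : 1 ≤ r)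
    (A : Matrix (Fin r) (Fin r) ℤ) (hA : IsGCM A)
    (hsym : IsSymmetrisable A) (hfin : IsFiniteType A) (hind : IsIndecomposable A)
    (f : Fin r → ℤ → ℤ) (hnonneg : ∀ i m, 0 ≤ f i m)
    (hrel : ∀ i m, f i m + f i (m + 1) =
      (∑ j ∈ Finset.univ.filter (fun j => i < j), (-(A j i)) * f j m) +
      (∑ j ∈ Finset.univ.filter (fun j => j < i), (-(A j i)) * f j (m + 1))) :
    ∀ i m, f i m = 0 := by
  haveI : Nonempty (Fin r) := Fin.pos_iff_nonempty.mp hr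
  obtain ⟨d, hdpos, hd⟩ := hsym
  obtain ⟨hdiag, _hoff⟩ := hA
  -- integral symmetriser of `Aᵀ`
  set e : Fin r → ℤ := fun i => ∏ j ∈ Finset.univ.erase i, d j with he
  have hepos : ∀ i, 0 < e i := fun i => Finset.prod_pos (fun j _ => hdpos j)
  have hde : ∀ i, d i * e i = ∏ j, d j := fun i =>
    Finset.mul_prod_erase Finset.univ d (Finset.mem_univ i)
  have hesym : ∀ i j, e i * A j i = e j * A i j := by
    intro i j
    have hcan : d i * d j * (e i * A j i) = d i * d j * (e j * A i j) := by
      calc d i * d j * (e i * A j i) = (d i * e i) * (d j * A j i) := by ring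
        _ = (d i * e i) * (d i * A i j) := by rw [← hd i j]
        _ = (d j * e j) * (d i * A i j) := by rw [hde i, hde j]
        _ = d i * d j * (e j * A i j) := by ring
    exact mul_left_cancel₀ (mul_pos (hdpos i) (hdpos j)).ne' hcan
  -- real versions
  set E : Fin r → ℝ := fun i => (e i : ℝ) with hE
  set A' : Fin r → Fin r → ℝ := fun i j => ((A i j : ℤ) : ℝ) with hA'
  have hEsym : ∀ i j, E i * A' j i = E j * A' i j := by
    intro i j
    show ((e i : ℝ)) * ((A j i : ℝ)) = ((e j : ℝ)) * ((A i j : ℝ))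
    exact_mod_cast hesym i j
  have hdiag' : ∀ i, A' i i = 2 := by
    intro i
    show ((A i i : ℝ)) = 2
    exact_mod_cast hdiag i
  -- the symmetrised Gram matrix over ℝ
  set G : Matrix (Fin r) (Fin r) ℝ := Matrix.of (fun i j => E i * A' j i) with hG
  have hGapp : ∀ i j, G i j = E i * A' j i := fun i j => rfl
  have hGherm : G.IsHermitian := by
    show Gᴴ = G
    ext i j
    rw [Matrix.conjTranspose_apply, star_trivial, hGapp, hGapp]
    exact (hEsym i j).symm
  have hGminors : ∀ I : Finset (Fin r), I.Nonempty →
      0 < (G.submatrix (Subtype.val : {x // x ∈ I} → Fin r) Subtype.val).det := by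
    intro I hI
    have hfactor : G.submatrix (Subtype.val : {x // x ∈ I} → Fin r) Subtype.val
        = Matrix.diagonal (fun x : {x // x ∈ I} => E x.val)
          * ((A.submatrix (Subtype.val : {x // x ∈ I} → Fin r) Subtype.val).map
              (Int.cast : ℤ → ℝ))ᵀ := by
      ext a b
      rw [Matrix.diagonal_mul, Matrix.transpose_apply, Matrix.map_apply]
      rfl
    rw [hfactor, Matrix.det_mul, Matrix.det_diagonal, Matrix.det_transpose]
    have h1 : 0 < ∏ x : {x // x ∈ I}, E x.val :=
      Finset.prod_pos (fun x _ => by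
        show (0 : ℝ) < ((e x.val : ℤ) : ℝ)
        exact_mod_cast hepos x.val)
    have h2 : (0 : ℝ) < ((A.submatrix (Subtype.val : {x // x ∈ I} → Fin r) Subtype.val).map
        (Int.cast : ℤ → ℝ)).det := by
      have h3 := hfin I hI
      have h4 : ((A.submatrix (Subtype.val : {x // x ∈ I} → Fin r) Subtype.val).map
          (Int.cast : ℤ → ℝ)).det
          = (((A.submatrix (Subtype.val : {x // x ∈ I} → Fin r) Subtype.val).det : ℤ) : ℝ) :=
        (RingHom.map_det (Int.castRingHom ℝ) _).symm
      rw [h4]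
      exact_mod_cast h3
    exact mul_pos h1 h2
  have hGpsd : G.PosSemidef := posSemidef_of_minors_pos r G hGherm hGminors
  have hGdet : 0 < G.det := by
    rw [← det_eq_minor_univ G]
    exact hGminors Finset.univ Finset.univ_nonempty
  -- the real trajectory and conservation of the quadratic form
  set X : ℤ → Fin r → ℝ := fun m i => ((f i m : ℤ) : ℝ) with hX
  have hrelR : ∀ (m : ℤ) (i : Fin r), X m i + X (m + 1) i
      = (∑ j, if i < j then (-A' j i) * X m j else 0)
        + (∑ j, if j < i then (-A' j i) * X (m + 1) j else 0) := by
    intro m i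
    have h1 : ((f i m : ℤ) : ℝ) + ((f i (m + 1) : ℤ) : ℝ)
        = (∑ j ∈ Finset.univ.filter (fun j => i < j),
            (-((A j i : ℤ) : ℝ)) * ((f j m : ℤ) : ℝ))
          + (∑ j ∈ Finset.univ.filter (fun j => j < i),
            (-((A j i : ℤ) : ℝ)) * ((f j (m + 1) : ℤ) : ℝ)) := by
      exact_mod_cast hrel i m
    rw [Finset.sum_filter, Finset.sum_filter] at h1
    exact h1
  have hcons : ∀ m : ℤ, ∑ i, ∑ j, E i * A' j i * X m i * X m j
      = ∑ i, ∑ j, E i * A' j i * X 0 i * X 0 j := by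
    intro m
    induction m using Int.induction_on with
    | zero => rfl
    | succ k ihk =>
      rw [← ihk]
      exact (conserve E A' hEsym hdiag' (X k) (X (k + 1)) (hrelR k)).symm
    | pred k ihk =>
      rw [← ihk]
      have h := conserve E A' hEsym hdiag' (X (-(k : ℤ) - 1)) (X (-(k : ℤ) - 1 + 1))
        (hrelR (-(k : ℤ) - 1))
      have h2 : (-(k : ℤ) - 1 + 1) = -(k : ℤ) := by ring
      rw [h2] at h
      exact h
  set c : ℝ := ∑ i, ∑ j, E i * A' j i * X 0 i * X 0 j with hc
  have hQX : ∀ m : ℤ, (X m) ⬝ᵥ G *ᵥ (X m) = c := by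
    intro m
    have hdot : (X m) ⬝ᵥ G *ᵥ (X m) = ∑ i, ∑ j, E i * A' j i * X m i * X m j := by
      simp only [dotProduct, Matrix.mulVec, Finset.mul_sum]
      refine Finset.sum_congr rfl (fun i _ => Finset.sum_congr rfl (fun j _ => ?_))
      rw [hGapp]
      ring
    rw [hdot]
    exact hcons m
  -- per-coordinate bound
  set K : ℝ := Finset.univ.sup' Finset.univ_nonempty
      (fun i => ((G⁻¹ *ᵥ Pi.single i 1) ⬝ᵥ G *ᵥ (G⁻¹ *ᵥ Pi.single i 1)) * c) with hK
  have hXbound : ∀ (m : ℤ) (i : Fin r), (X m i) ^ 2 ≤ K := by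
    intro m i
    calc (X m i) ^ 2
        ≤ ((G⁻¹ *ᵥ Pi.single i 1) ⬝ᵥ G *ᵥ (G⁻¹ *ᵥ Pi.single i 1)) * ((X m) ⬝ᵥ G *ᵥ (X m)) :=
          coord_bound hGpsd hGdet.ne' (X m) i
      _ = ((G⁻¹ *ᵥ Pi.single i 1) ⬝ᵥ G *ᵥ (G⁻¹ *ᵥ Pi.single i 1)) * c := by rw [hQX m]
      _ ≤ K := by
          rw [hK]
          exact Finset.le_sup'
            (fun i => ((G⁻¹ *ᵥ Pi.single i 1) ⬝ᵥ G *ᵥ (G⁻¹ *ᵥ Pi.single i 1)) * c)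
            (Finset.mem_univ i)
  obtain ⟨Bn, hBn⟩ := exists_nat_ge K
  set Bz : ℤ := (Bn : ℤ) with hBz
  have hBz0 : 0 ≤ Bz := Int.natCast_nonneg Bn
  have hfB : ∀ (i : Fin r) (m : ℤ), f i m ≤ Bz := by
    intro i m
    by_contra hcon
    push_neg at hcon
    have h1 : (Bz : ℝ) + 1 ≤ ((f i m : ℤ) : ℝ) := by exact_mod_cast hcon
    have h2 := hXbound m i
    have h3 : (0 : ℝ) ≤ (Bz : ℝ) := by exact_mod_cast hBz0
    have hKB : K ≤ (Bz : ℝ) := by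
      rw [hBz]
      push_cast
      exact hBn
    have hXeq : X m i = ((f i m : ℤ) : ℝ) := rfl
    nlinarith [h1, h2, h3, hKB]
    -- integer endgame: window sums are uniformly bounded
  set adj : Matrix (Fin r) (Fin r) ℤ := (Aᵀ).adjugate with hadj
  set CA : ℤ := ∑ p, ∑ q, |A p q| with hCA
  set AD : ℤ := ∑ p, ∑ q, |adj p q| with hAD
  set C1 : ℤ := Bz * (1 + CA) with hC1
  set K2 : ℤ := AD * C1 with hK2
  have hCA0 : 0 ≤ CA := Finset.sum_nonneg fun p _ => Finset.sum_nonneg fun q _ => abs_nonneg _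
  have hAD0 : 0 ≤ AD := Finset.sum_nonneg fun p _ => Finset.sum_nonneg fun q _ => abs_nonneg _
  have hC10 : 0 ≤ C1 := mul_nonneg hBz0 (by linarith)
  have hK20 : 0 ≤ K2 := mul_nonneg hAD0 hC10
  have hdetA : 0 < A.det := by
    rw [← det_eq_minor_univ' A]
    exact hfin Finset.univ Finset.univ_nonempty
  have hdetA1 : 1 ≤ A.det := hdetA
  -- the master telescoping identity
  have master : ∀ M N : ℤ, M ≤ N → ∀ i : Fin r,
      ∑ j, A j i * (∑ m ∈ Finset.Icc M N, f j m)
        = (f i M - f i (N + 1))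
          + ∑ j, (if j < i then (-(A j i)) * (f j (N + 1) - f j M) else 0) := by
    intro M N hMN i
    set S : Fin r → ℤ := fun j => ∑ m ∈ Finset.Icc M N, f j m with hS
    set T : Fin r → ℤ := fun j => ∑ m ∈ Finset.Icc M N, f j (m + 1) with hT
    have hshift : ∀ j, T j + f j M = S j + f j (N + 1) := fun j => sum_shift (f j) M N hMN
    have key : S i + T i = (∑ j, if i < j then (-(A j i)) * S j else 0)
        + (∑ j, if j < i then (-(A j i)) * T j else 0) := by
      calc S i + T i = ∑ m ∈ Finset.Icc M N, (f i m + f i (m + 1)) :=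
            (Finset.sum_add_distrib).symm
        _ = ∑ m ∈ Finset.Icc M N,
            ((∑ j ∈ Finset.univ.filter (fun j => i < j), (-(A j i)) * f j m)
              + (∑ j ∈ Finset.univ.filter (fun j => j < i), (-(A j i)) * f j (m + 1))) :=
          Finset.sum_congr rfl (fun m _ => hrel i m)
        _ = (∑ m ∈ Finset.Icc M N, ∑ j ∈ Finset.univ.filter (fun j => i < j),
              (-(A j i)) * f j m)
            + (∑ m ∈ Finset.Icc M N, ∑ j ∈ Finset.univ.filter (fun j => j < i),
              (-(A j i)) * f j (m + 1)) := Finset.sum_add_distrib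
        _ = (∑ j ∈ Finset.univ.filter (fun j => i < j), ∑ m ∈ Finset.Icc M N,
              (-(A j i)) * f j m)
            + (∑ j ∈ Finset.univ.filter (fun j => j < i), ∑ m ∈ Finset.Icc M N,
              (-(A j i)) * f j (m + 1)) := by
          congr 1 <;> exact Finset.sum_comm
        _ = (∑ j ∈ Finset.univ.filter (fun j => i < j), (-(A j i)) * S j)
            + (∑ j ∈ Finset.univ.filter (fun j => j < i), (-(A j i)) * T j) := by
          congr 1 <;> exact Finset.sum_congr rfl (fun j _ => (Finset.mul_sum _ _ _).symm)
        _ = _ := by rw [Finset.sum_filter, Finset.sum_filter]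
    have hsplit := tri_split i (fun j => A j i * S j)
    have e1 : ∑ j, (if i < j then (-(A j i)) * S j else 0)
        = -∑ j, (if i < j then A j i * S j else 0) := by
      rw [← Finset.sum_neg_distrib]
      exact Finset.sum_congr rfl (fun j _ => by split_ifs <;> ring)
    have e2 : ∑ j, (if j < i then (-(A j i)) * T j else 0)
        = (-∑ j, (if j < i then A j i * S j else 0))
          + ∑ j, (if j < i then (-(A j i)) * (f j (N + 1) - f j M) else 0) := by
      rw [← Finset.sum_neg_distrib, ← Finset.sum_add_distrib]
      refine Finset.sum_congr rfl (fun j _ => ?_)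
      have hs := hshift j
      split_ifs with h
      · linear_combination (-(A j i)) * hs
      · ring
    rw [e1, e2] at key
    rw [hsplit, hdiag i]
    have hti := hshift i
    linarith [key, hti]
  -- window sums satisfy `A.det * S = adj *ᵥ b`
  have hdetS : ∀ M N : ℤ, M ≤ N → ∀ i : Fin r,
      A.det * (∑ m ∈ Finset.Icc M N, f i m)
        = ∑ j, adj i j * ((f j M - f j (N + 1))
            + ∑ q, (if q < j then (-(A q j)) * (f q (N + 1) - f q M) else 0)) := by
    intro M N hMN i
    set S : Fin r → ℤ := fun j => ∑ m ∈ Finset.Icc M N, f j m with hS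
    set b : Fin r → ℤ := fun j => (f j M - f j (N + 1))
        + ∑ q, (if q < j then (-(A q j)) * (f q (N + 1) - f q M) else 0) with hb
    have hv : Aᵀ *ᵥ S = b := by
      funext j
      show ∑ q, Aᵀ j q * S q = b j
      simp only [Matrix.transpose_apply]
      exact master M N hMN j
    have h2 : adj *ᵥ (Aᵀ *ᵥ S) = A.det • S := by
      rw [Matrix.mulVec_mulVec, hadj, Matrix.adjugate_mul, Matrix.det_transpose,
        Matrix.smul_mulVec, Matrix.one_mulVec]
    rw [hv] at h2
    have h3 := congrFun h2.symm i
    have h4 : A.det * S i = ∑ j, adj i j * b j := by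
      simpa [Matrix.mulVec, dotProduct] using h3
    simp only [hS, hb] at h4
    exact h4
  -- uniform bound on window sums
  have hwin : ∀ M N : ℤ, M ≤ N → ∀ i : Fin r, (∑ m ∈ Finset.Icc M N, f i m) ≤ K2 := by
    intro M N hMN i
    have hbb : ∀ j : Fin r, |(f j M - f j (N + 1))
        + ∑ q, (if q < j then (-(A q j)) * (f q (N + 1) - f q M) else 0)| ≤ C1 := by
      intro j
      have hd1 : |f j M - f j (N + 1)| ≤ Bz := by
        rw [abs_le]
        constructor
        all_goals
          have h1 := hfB j (N + 1); have h2 := hnonneg j M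
          have h3 := hfB j M; have h4 := hnonneg j (N + 1); omega
      have hd2 : |∑ q, (if q < j then (-(A q j)) * (f q (N + 1) - f q M) else 0)|
          ≤ CA * Bz := by
        calc |∑ q, (if q < j then (-(A q j)) * (f q (N + 1) - f q M) else 0)|
            ≤ ∑ q, |(if q < j then (-(A q j)) * (f q (N + 1) - f q M) else 0)| :=
              Finset.abs_sum_le_sum_abs _ _
          _ ≤ ∑ q, |A q j| * Bz := by
              refine Finset.sum_le_sum (fun q _ => ?_)
              split_ifs with h
              · rw [abs_mul, abs_neg]
                refine mul_le_mul_of_nonneg_left ?_ (abs_nonneg _)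
                rw [abs_le]
                constructor
                all_goals
                  have h1 := hfB q (N + 1); have h2 := hnonneg q M
                  have h3 := hfB q M; have h4 := hnonneg q (N + 1); omega
              · simp only [abs_zero]
                exact mul_nonneg (abs_nonneg _) hBz0
          _ = (∑ q, |A q j|) * Bz := (Finset.sum_mul _ _ _).symm
          _ ≤ CA * Bz := by
              refine mul_le_mul_of_nonneg_right ?_ hBz0
              rw [hCA]
              refine Finset.sum_le_sum (fun q _ => ?_)
              exact Finset.single_le_sum (fun p _ => abs_nonneg (A q p)) (Finset.mem_univ j)
      calc |(f j M - f j (N + 1))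
          + ∑ q, (if q < j then (-(A q j)) * (f q (N + 1) - f q M) else 0)|
          ≤ |f j M - f j (N + 1)|
            + |∑ q, (if q < j then (-(A q j)) * (f q (N + 1) - f q M) else 0)| := abs_add_le _ _
        _ ≤ Bz + CA * Bz := add_le_add hd1 hd2
        _ = C1 := by rw [hC1]; ring
    have hS0 : 0 ≤ ∑ m ∈ Finset.Icc M N, f i m :=
      Finset.sum_nonneg (fun m _ => hnonneg i m)
    have h1 : A.det * (∑ m ∈ Finset.Icc M N, f i m) ≤ K2 := by
      rw [hdetS M N hMN i]
      calc ∑ j, adj i j * ((f j M - f j (N + 1))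
            + ∑ q, (if q < j then (-(A q j)) * (f q (N + 1) - f q M) else 0))
          ≤ |∑ j, adj i j * ((f j M - f j (N + 1))
            + ∑ q, (if q < j then (-(A q j)) * (f q (N + 1) - f q M) else 0))| := le_abs_self _
        _ ≤ ∑ j, |adj i j * ((f j M - f j (N + 1))
            + ∑ q, (if q < j then (-(A q j)) * (f q (N + 1) - f q M) else 0))| :=
            Finset.abs_sum_le_sum_abs _ _
        _ ≤ ∑ j, |adj i j| * C1 := by
            refine Finset.sum_le_sum (fun j _ => ?_)
            rw [abs_mul]
            exact mul_le_mul_of_nonneg_left (hbb j) (abs_nonneg _)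
        _ = (∑ j, |adj i j|) * C1 := (Finset.sum_mul _ _ _).symm
        _ ≤ AD * C1 := by
            refine mul_le_mul_of_nonneg_right ?_ hC10
            rw [hAD]
            exact Finset.single_le_sum (f := fun p => ∑ q, |adj p q|)
              (fun p _ => Finset.sum_nonneg fun q _ => abs_nonneg _) (Finset.mem_univ i)
        _ = K2 := hK2.symm
    have h2 : (∑ m ∈ Finset.Icc M N, f i m) ≤ A.det * (∑ m ∈ Finset.Icc M N, f i m) :=
      le_mul_of_one_le_left hS0 hdetA1
    linarith
  -- windows with zero boundary values have zero sums
  have hwin0 : ∀ M N : ℤ, M ≤ N → (∀ j, f j M = 0) → (∀ j, f j (N + 1) = 0) →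
      ∀ i : Fin r, (∑ m ∈ Finset.Icc M N, f i m) = 0 := by
    intro M N hMN hM0 hN0 i
    have h1 := hdetS M N hMN i
    have h2 : (∑ j, adj i j * ((f j M - f j (N + 1))
        + ∑ q, (if q < j then (-(A q j)) * (f q (N + 1) - f q M) else 0))) = 0 :=
      Finset.sum_eq_zero (fun j _ => by simp [hM0, hN0])
    rw [h2] at h1
    rcases mul_eq_zero.mp h1 with h | h
    · exact absurd h hdetA.ne'
    · exact h
  -- the support of `f` is finite
  set U : Set ℤ := {m : ℤ | ∃ i, f i m ≠ 0} with hU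
  have hUfin : U.Finite := by
    by_contra hinf
    have hinf' : U.Infinite := hinf
    obtain ⟨V, hVU, hVcard⟩ := hinf'.exists_subset_card_eq (r * K2.toNat + 1)
    have hVne : V.Nonempty := Finset.card_pos.mp (by rw [hVcard]; omega)
    set M := V.min' hVne with hM
    set N := V.max' hVne with hN
    have hMN : M ≤ N := by
      obtain ⟨x, hx⟩ := hVne
      exact le_trans (V.min'_le x hx) (V.le_max' x hx)
    have hsub : V ⊆ Finset.Icc M N := fun x hx =>
      Finset.mem_Icc.mpr ⟨V.min'_le x hx, V.le_max' x hx⟩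
    have h1 : (V.card : ℤ) ≤ ∑ m ∈ V, ∑ i, f i m := by
      rw [Finset.card_eq_sum_ones V]
      push_cast
      refine Finset.sum_le_sum (fun m hm => ?_)
      obtain ⟨i, hi⟩ := hVU hm
      have hge : 1 ≤ f i m := by
        have := hnonneg i m
        omega
      calc (1 : ℤ) ≤ f i m := hge
        _ ≤ ∑ i, f i m := Finset.single_le_sum (fun i _ => hnonneg i m) (Finset.mem_univ i)
    have h2 : ∑ m ∈ V, ∑ i, f i m ≤ ∑ m ∈ Finset.Icc M N, ∑ i, f i m :=
      Finset.sum_le_sum_of_subset_of_nonneg hsub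
        (fun m _ _ => Finset.sum_nonneg fun i _ => hnonneg i m)
    have h3 : ∑ m ∈ Finset.Icc M N, ∑ i, f i m = ∑ i, ∑ m ∈ Finset.Icc M N, f i m :=
      Finset.sum_comm
    have h4 : ∑ i : Fin r, (∑ m ∈ Finset.Icc M N, f i m) ≤ ∑ _i : Fin r, K2 :=
      Finset.sum_le_sum (fun i _ => hwin M N hMN i)
    have h5 : ∑ _i : Fin r, K2 = (r : ℤ) * K2 := by
      rw [Finset.sum_const, Finset.card_univ, Fintype.card_fin, nsmul_eq_mul]
    have h6 : (V.card : ℤ) ≤ (r : ℤ) * K2 := by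
      calc (V.card : ℤ) ≤ ∑ m ∈ V, ∑ i, f i m := h1
        _ ≤ ∑ m ∈ Finset.Icc M N, ∑ i, f i m := h2
        _ = ∑ i, ∑ m ∈ Finset.Icc M N, f i m := h3
        _ ≤ ∑ _i : Fin r, K2 := h4
        _ = (r : ℤ) * K2 := h5
    rw [hVcard] at h6
    have h8 : ((r * K2.toNat + 1 : ℕ) : ℤ) = (r : ℤ) * K2 + 1 := by
      push_cast [Int.toNat_of_nonneg hK20]
      ring
    rw [h8] at h6
    linarith
  -- conclusion
  intro i m
  by_contra hfm
  have hmU : m ∈ U := ⟨i, hfm⟩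
  have hmW : m ∈ hUfin.toFinset := hUfin.mem_toFinset.mpr hmU
  have hWne : (hUfin.toFinset).Nonempty := ⟨m, hmW⟩
  set M := (hUfin.toFinset).min' hWne - 1 with hMdef
  set N := (hUfin.toFinset).max' hWne with hNdef
  have hMN : M ≤ N := by
    have h1 := (hUfin.toFinset).min'_le m hmW
    have h2 := (hUfin.toFinset).le_max' m hmW
    omega
  have hM0 : ∀ j, f j M = 0 := by
    intro j
    by_contra h0
    have hin : M ∈ hUfin.toFinset := hUfin.mem_toFinset.mpr ⟨j, h0⟩
    have := (hUfin.toFinset).min'_le M hin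
    omega
  have hN0 : ∀ j, f j (N + 1) = 0 := by
    intro j
    by_contra h0
    have hin : N + 1 ∈ hUfin.toFinset := hUfin.mem_toFinset.mpr ⟨j, h0⟩
    have := (hUfin.toFinset).le_max' (N + 1) hin
    omega
  have hzero := hwin0 M N hMN hM0 hN0 i
  have hmem : m ∈ Finset.Icc M N := by
    refine Finset.mem_Icc.mpr ⟨?_, (hUfin.toFinset).le_max' m hmW⟩
    have := (hUfin.toFinset).min'_le m hmW
    omega
  exact hfm ((Finset.sum_eq_zero_iff_of_nonneg (fun x _ => hnonneg i x)).mp hzero m hmem)
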